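/- Let T be a Grothendieck site whose topos of sheaves Shv(T) is replete. Let h : (F_i)_{i∈ℕ} → (G_i)_{i∈ℕ} be a morphism of ℕ-indexed inverse systems of multiplicative presheaves on T such that each induced map F_i^♯ → G_i^♯ on sheafifications is an isomorphism. Then the natural map (lim_i F_i)^♯ → (lim_i G_i)^♯ is an epimorphism of sheaves. -/

import Mathlib

open CategoryTheory Limits Opposite

universe u


variable {C : Type u} [SmallCategory C]

/-- A presheaf `P` on a Grothendieck site is *multiplicative* if for every set-indexed
family `{X_j}` of objects, the natural map
`Hom((∐_j h_{X_j})^♯, P) → Hom(∐_j h_{X_j}, P) ≅ ∏_j P(X_j)` is a bijection. -/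
def IsMultiplicative (J : GrothendieckTopology C) (P : Cᵒᵖ ⥤ Type u) : Prop :=
  ∀ (ι : Type u) (X : ι → C),
    Function.Bijective
      (fun (g : sheafify J (∐ fun j => yoneda.obj (X j)) ⟶ P) (j : ι) =>
        yonedaEquiv
          (Sigma.ι (fun j => yoneda.obj (X j)) j ≫
            toSheafify J (∐ fun j => yoneda.obj (X j)) ≫ g))

/-- A category (e.g. a 1-topos) is *replete* if for every `ℕ`-indexed inverse system
in which all transition maps are epimorphisms, the projections from the inverse limit
are epimorphisms. -/
def IsReplete (D : Type*) [CategoryTheory.Category D]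
    [HasLimitsOfShape ℕᵒᵖ D] : Prop :=
  ∀ F : ℕᵒᵖ ⥤ D,
    (∀ n : ℕ, Epi (F.map (homOfLE (Nat.le_succ n)).op)) →
    ∀ n : ℕ, Epi (limit.π F (op n))

namespace Stmt7Aux


lemma yapp {P : Cᵒᵖ ⥤ Type u} {Z Y : C} (τ : yoneda.obj Z ⟶ P) (f : Y ⟶ Z) :
    τ.app (op Y) f = P.map f.op (yonedaEquiv τ) := by
  rw [yonedaEquiv_naturality]
  simp [yonedaEquiv_apply]

/-- One stage of the tower of covers with lifts. -/
structure Stage {X : C} (Fn Gn : Cᵒᵖ ⥤ Type u) (ηn : Fn ⟶ Gn) (sn : Gn.obj (op X)) :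
    Type (u + 1) where
  ι : Type u
  obj : ι → C
  hom : ∀ j, obj j ⟶ X
  lift : ∀ j, Fn.obj (op (obj j))
  hlift : ∀ j, ηn.app (op (obj j)) (lift j) = Gn.map (hom j).op sn

variable {X : C} {Fn Gn F' G' : Cᵒᵖ ⥤ Type u} {ηn : Fn ⟶ Gn} {η' : F' ⟶ G'}
  {sn : Gn.obj (op X)}

/-- The initial stage. -/
noncomputable def stage0 (ηn : Fn ⟶ Gn) (sn : Gn.obj (op X)) : Stage Fn Gn ηn sn where
  ι := Σ (Y : C), { f : Y ⟶ X // Presheaf.imageSieve ηn sn f }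
  obj := fun k => k.1
  hom := fun k => k.2.1
  lift := fun k => k.2.2.choose
  hlift := fun k => k.2.2.choose_spec

variable (J : GrothendieckTopology C)

lemma stage0_covers [Presheaf.IsLocallySurjective J ηn] :
    Sieve.generate (Presieve.ofArrows (stage0 ηn sn).obj (stage0 ηn sn).hom) ∈ J X := by
  refine J.superset_covering ?_ (Presheaf.imageSieve_mem J ηn (U := op X) sn)
  rintro Y f hf
  exact ⟨Y, 𝟙 Y, (stage0 ηn sn).hom ⟨Y, f, hf⟩,
    Presieve.ofArrows.mk (⟨Y, f, hf⟩ : (stage0 ηn sn).ι), by simp [stage0]⟩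

variable (η' : F' ⟶ G') (tF : F' ⟶ Fn) (s' : G'.obj (op X))

/-- The sieve of arrows along which a compatible lift at the next level exists. -/
def stepSieve (st : Stage Fn Gn ηn sn) (j : st.ι) : Sieve (st.obj j) where
  arrows Z g := ∃ t : F'.obj (op Z),
    η'.app (op Z) t = G'.map (g ≫ st.hom j).op s' ∧ tF.app (op Z) t = Fn.map g.op (st.lift j)
  downward_closed := by
    rintro Z W g ⟨t, h1, h2⟩ e
    refine ⟨F'.map e.op t, ?_, ?_⟩
    · rw [FunctorToTypes.naturality, h1, ← FunctorToTypes.map_comp_apply, ← op_comp,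
        Category.assoc]
    · rw [FunctorToTypes.naturality, h2, ← FunctorToTypes.map_comp_apply, ← op_comp]

lemma stepSieve_mem (tG : G' ⟶ Gn) (hcomm : η' ≫ tG = tF ≫ ηn)
    (hs' : tG.app (op X) s' = sn)
    [Presheaf.IsLocallySurjective J η'] [Presheaf.IsLocallyInjective J ηn]
    (st : Stage Fn Gn ηn sn) (j : st.ι) :
    stepSieve η' tF s' st j ∈ J (st.obj j) := by
  have hA : Presheaf.imageSieve η' (G'.map (st.hom j).op s') ∈ J (st.obj j) :=
    Presheaf.imageSieve_mem J η' (U := op (st.obj j)) _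
  refine J.superset_covering ?_ (J.bind_covering hA
    (R := fun Y g _ => (stepSieve η' tF s' st j).pullback g) ?_)
  · rintro W f ⟨Y, e, g, hg, he, rfl⟩
    exact he
  · intro Y g hg
    obtain ⟨t, ht0⟩ := hg
    have ht : η'.app (op Y) t = G'.map ((st.hom j).op ≫ g.op) s' := by
      simpa using ht0
    refine J.superset_covering ?_
      (Presheaf.equalizerSieve_mem J ηn (tF.app (op Y) t) (Fn.map g.op (st.lift j)) ?_)
    · intro W e he
      have heq : Fn.map e.op (tF.app (op Y) t) = Fn.map e.op (Fn.map g.op (st.lift j)) := he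
      refine ⟨F'.map e.op t, ?_, ?_⟩
      · rw [FunctorToTypes.naturality, ht, ← FunctorToTypes.map_comp_apply, ← op_comp]
        simp
      · rw [FunctorToTypes.naturality, heq, ← FunctorToTypes.map_comp_apply, ← op_comp]
    · have h1 : ηn.app (op Y) (tF.app (op Y) t) = tG.app (op Y) (η'.app (op Y) t) := by
        have := ConcreteCategory.congr_hom (NatTrans.congr_app hcomm.symm (op Y)) t
        simpa using this
      show ηn.app (op Y) (tF.app (op Y) t) = ηn.app (op Y) (Fn.map g.op (st.lift j))
      rw [h1, ht, NatTrans.naturality_apply tG, NatTrans.naturality_apply ηn,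
        st.hlift j, hs', FunctorToTypes.map_comp_apply]

/-- The next stage of the tower. -/
noncomputable def step (st : Stage Fn Gn ηn sn) : Stage F' G' η' s' where
  ι := Σ (j : st.ι) (Z : C), { g : Z ⟶ st.obj j // stepSieve η' tF s' st j g }
  obj := fun k => k.2.1
  hom := fun k => k.2.2.1 ≫ st.hom k.1
  lift := fun k => k.2.2.2.choose
  hlift := fun k => k.2.2.2.choose_spec.1

lemma step_lift_compat (st : Stage Fn Gn ηn sn) (k : (step η' tF s' st).ι) :
    tF.app (op ((step η' tF s' st).obj k)) ((step η' tF s' st).lift k)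
      = Fn.map k.2.2.1.op (st.lift k.1) :=
  k.2.2.2.choose_spec.2

/-- The coproduct of representables attached to a stage. -/
noncomputable abbrev Stage.pre (st : Stage Fn Gn ηn sn) : Cᵒᵖ ⥤ Type u :=
  ∐ fun j => yoneda.obj (st.obj j)

/-- The coproduct of one copy of the representable of `X`. -/
noncomputable abbrev unitY (X : C) : Cᵒᵖ ⥤ Type u :=
  ∐ fun (_ : PUnit.{u + 1}) => yoneda.obj X

/-- The map from the coproduct of a stage to `unitY X`. -/
noncomputable def Stage.toY (st : Stage Fn Gn ηn sn) : st.pre ⟶ unitY X :=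
  Sigma.desc fun j => yoneda.map (st.hom j) ≫
    Sigma.ι (fun (_ : PUnit.{u + 1}) => yoneda.obj X) PUnit.unit

/-- The transition map between the coproducts of successive stages. -/
noncomputable def stepHom (st : Stage Fn Gn ηn sn) : (step η' tF s' st).pre ⟶ st.pre :=
  Sigma.desc fun k => yoneda.map k.2.2.1 ≫ Sigma.ι (fun j => yoneda.obj (st.obj j)) k.1

lemma stepHom_toY (st : Stage Fn Gn ηn sn) :
    stepHom η' tF s' st ≫ st.toY = (step η' tF s' st).toY := by
  apply Sigma.hom_ext
  intro k
  simp [stepHom, Stage.toY, step]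
  erw [Sigma.ι_desc_assoc, Sigma.ι_desc]
  simp

lemma sigma_exists_rep {ι : Type u} (P : ι → Cᵒᵖ ⥤ Type u) (Z : Cᵒᵖ) (x : (∐ P).obj Z) :
    ∃ (j : ι) (y : (P j).obj Z), (Sigma.ι P j).app Z y = x := by
  obtain ⟨⟨j⟩, y, h⟩ := Types.jointly_surjective _
    (isColimitOfPreserves ((evaluation Cᵒᵖ (Type u)).obj Z)
      (colimit.isColimit (Discrete.functor fun j => P j))) x
  exact ⟨j, y, h⟩

lemma toY_locSurj (st : Stage Fn Gn ηn sn)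
    (hcov : Sieve.generate (Presieve.ofArrows st.obj st.hom) ∈ J X) :
    Presheaf.IsLocallySurjective J st.toY where
  imageSieve_mem {U} x := by
    obtain ⟨j, y, rfl⟩ := sigma_exists_rep _ (op U) x
    cases j
    refine J.superset_covering ?_ (J.pullback_stable y hcov)
    intro W g hg
    obtain ⟨Z, h, f, hf, hfac⟩ := hg
    obtain ⟨i⟩ := hf
    refine ⟨(Sigma.ι (fun j => yoneda.obj (st.obj j)) i).app (op W) h, ?_⟩
    show st.toY.app (op W) ((Sigma.ι (fun j => yoneda.obj (st.obj j)) i).app (op W) h)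
      = (unitY X).map g.op ((Sigma.ι (fun (_ : PUnit.{u + 1}) => yoneda.obj X)
          PUnit.unit).app (op U) y)
    have h1 : st.toY.app (op W) ((Sigma.ι (fun j => yoneda.obj (st.obj j)) i).app (op W) h)
        = ((Sigma.ι (fun j => yoneda.obj (st.obj j)) i) ≫ st.toY).app (op W) h := rfl
    have h2 : (unitY X).map g.op ((Sigma.ι (fun (_ : PUnit.{u + 1}) => yoneda.obj X)
          PUnit.unit).app (op U) y)
        = (Sigma.ι (fun (_ : PUnit.{u + 1}) => yoneda.obj X) PUnit.unit).app (op W)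
          (g ≫ y) := by
      rw [← FunctorToTypes.naturality]
      rfl
    rw [h1, h2, Stage.toY, Sigma.ι_desc]
    show (Sigma.ι (fun (_ : PUnit.{u + 1}) => yoneda.obj X) PUnit.unit).app (op W)
      (h ≫ st.hom i) = _
    rw [hfac]

lemma stepHom_locSurj (st : Stage Fn Gn ηn sn)
    (hT : ∀ j, stepSieve η' tF s' st j ∈ J (st.obj j)) :
    Presheaf.IsLocallySurjective J (stepHom η' tF s' st) where
  imageSieve_mem {U} x := by
    obtain ⟨j, y, rfl⟩ := sigma_exists_rep _ (op U) x
    refine J.superset_covering ?_ (J.pullback_stable y (hT j))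
    intro W g hg
    refine ⟨(Sigma.ι (fun k => yoneda.obj ((step η' tF s' st).obj k))
      (⟨j, W, g ≫ y, hg⟩ : (step η' tF s' st).ι)).app (op W) (𝟙 W), ?_⟩
    show (stepHom η' tF s' st).app (op W)
        ((Sigma.ι (fun k => yoneda.obj ((step η' tF s' st).obj k))
          (⟨j, W, g ≫ y, hg⟩ : (step η' tF s' st).ι)).app (op W) (𝟙 W))
      = (st.pre).map g.op ((Sigma.ι (fun j => yoneda.obj (st.obj j)) j).app (op U) y)
    have h1 : (stepHom η' tF s' st).app (op W)
          ((Sigma.ι (fun k => yoneda.obj ((step η' tF s' st).obj k))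
            (⟨j, W, g ≫ y, hg⟩ : (step η' tF s' st).ι)).app (op W) (𝟙 W))
        = ((Sigma.ι (fun k => yoneda.obj ((step η' tF s' st).obj k))
            (⟨j, W, g ≫ y, hg⟩ : (step η' tF s' st).ι)) ≫ stepHom η' tF s' st).app
              (op W) (𝟙 W) := rfl
    have h2 : (st.pre).map g.op ((Sigma.ι (fun j => yoneda.obj (st.obj j)) j).app (op U) y)
        = (Sigma.ι (fun j => yoneda.obj (st.obj j)) j).app (op W) (g ≫ y) := by
      rw [← FunctorToTypes.naturality]
      rfl
    rw [h1, h2, stepHom]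
    erw [Sigma.ι_desc]
    show (Sigma.ι (fun j => yoneda.obj (st.obj j)) j).app (op W) (𝟙 W ≫ (g ≫ y)) = _
    rw [Category.id_comp]

section Mult

variable {J} {P : Cᵒᵖ ⥤ Type u} {ι' : Type u}

/-- The map out of a sheafified coproduct determined by a multiplicative structure. -/
noncomputable def multMap (h : IsMultiplicative J P) (Xs : ι' → C)
    (v : ∀ j, P.obj (op (Xs j))) :
    sheafify J (∐ fun j => yoneda.obj (Xs j)) ⟶ P :=
  ((h ι' Xs).2 v).choose

lemma multMap_spec (h : IsMultiplicative J P) (Xs : ι' → C)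
    (v : ∀ j, P.obj (op (Xs j))) (j : ι') :
    yonedaEquiv (Sigma.ι (fun j => yoneda.obj (Xs j)) j ≫
      toSheafify J (∐ fun j => yoneda.obj (Xs j)) ≫ multMap h Xs v) = v j :=
  congr_fun ((h ι' Xs).2 v).choose_spec j

lemma mult_hom_ext (h : IsMultiplicative J P) {Xs : ι' → C}
    {g g' : sheafify J (∐ fun j => yoneda.obj (Xs j)) ⟶ P}
    (hc : ∀ j, Sigma.ι (fun j => yoneda.obj (Xs j)) j ≫
        toSheafify J (∐ fun j => yoneda.obj (Xs j)) ≫ g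
      = Sigma.ι (fun j => yoneda.obj (Xs j)) j ≫
        toSheafify J (∐ fun j => yoneda.obj (Xs j)) ≫ g') : g = g' :=
  (h ι' Xs).1 (funext fun j => by dsimp only; rw [hc j])

end Mult

section LimTools

lemma nat_op_map_le {M : ℕᵒᵖ ⥤ Type u} (a : ∀ n : ℕ, M.obj (op n))
    (h : ∀ n, M.map (homOfLE (Nat.le_succ n)).op (a (n + 1)) = a n)
    (n m : ℕ) (hle : n ≤ m) : M.map (homOfLE hle).op (a m) = a n := by
  induction m, hle using Nat.le_induction with
  | base =>
      rw [show (homOfLE (le_refl n) : (n : ℕ) ⟶ n) = 𝟙 n from rfl]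
      simp
  | succ m hm ih =>
      show M.map (homOfLE (Nat.le_succ_of_le hm)).op (a (m + 1)) = a n
      rw [show (homOfLE (Nat.le_succ_of_le hm) : (n : ℕ) ⟶ (m + 1))
          = homOfLE hm ≫ homOfLE (Nat.le_succ m) from rfl, op_comp, M.map_comp]
      simp only [types_comp_apply]
      rw [h m]
      exact ih

lemma nat_op_map_eq {M : ℕᵒᵖ ⥤ Type u} (a : ∀ n : ℕ, M.obj (op n))
    (h : ∀ n, M.map (homOfLE (Nat.le_succ n)).op (a (n + 1)) = a n)
    {k k' : ℕᵒᵖ} (f : k ⟶ k') : M.map f (a k.unop) = a k'.unop := by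
  have hle : k'.unop ≤ k.unop := leOfHom f.unop
  have hf : f = (homOfLE hle).op := by
    rw [← Quiver.Hom.op_unop f]
    congr 1
  rw [hf]
  exact nat_op_map_le a h _ _ hle

/-- Build an element of the value of a limit of `ℕᵒᵖ`-indexed presheaves from a
compatible sequence of elements. -/
noncomputable def limElt (M : ℕᵒᵖ ⥤ Cᵒᵖ ⥤ Type u) (Z : Cᵒᵖ)
    (a : ∀ n : ℕ, (M.obj (op n)).obj Z)
    (h : ∀ n, (M.map (homOfLE (Nat.le_succ n)).op).app Z (a (n + 1)) = a n) :
    (limit M).obj Z :=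
  (limitObjIsoLimitCompEvaluation M Z).inv
    (Types.Limit.mk (M ⋙ (evaluation Cᵒᵖ (Type u)).obj Z) (fun k => a k.unop)
      (fun _ _ f => nat_op_map_eq (M := M ⋙ (evaluation Cᵒᵖ (Type u)).obj Z) a h f))

lemma limElt_π (M : ℕᵒᵖ ⥤ Cᵒᵖ ⥤ Type u) (Z : Cᵒᵖ)
    (a : ∀ n : ℕ, (M.obj (op n)).obj Z)
    (h : ∀ n, (M.map (homOfLE (Nat.le_succ n)).op).app Z (a (n + 1)) = a n) (n : ℕ) :
    (limit.π M (op n)).app Z (limElt M Z a h) = a n := by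
  have h1 := ConcreteCategory.congr_hom (limitObjIsoLimitCompEvaluation_inv_π_app M (op n) Z)
    (Types.Limit.mk (M ⋙ (evaluation Cᵒᵖ (Type u)).obj Z) (fun k => a k.unop)
      (fun _ _ f => nat_op_map_eq (M := M ⋙ (evaluation Cᵒᵖ (Type u)).obj Z) a h f))
  dsimp at h1
  rw [limElt]
  exact h1.trans (Types.Limit.π_mk _ _ _ _)

lemma limObj_ext (M : ℕᵒᵖ ⥤ Cᵒᵖ ⥤ Type u) (Z : Cᵒᵖ) (x y : (limit M).obj Z)
    (hxy : ∀ n : ℕ, (limit.π M (op n)).app Z x = (limit.π M (op n)).app Z y) : x = y := by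
  apply ((limitObjIsoLimitCompEvaluation M Z).toEquiv).injective
  apply Types.limit_ext
  intro k
  have h1 := ConcreteCategory.congr_hom (limitObjIsoLimitCompEvaluation_hom_π M k Z) x
  have h2 := ConcreteCategory.congr_hom (limitObjIsoLimitCompEvaluation_hom_π M k Z) y
  dsimp at h1 h2 ⊢
  erw [h1, h2]
  exact hxy k.unop

end LimTools

lemma presheafToSheaf_map_locSurj {P Q : Cᵒᵖ ⥤ Type u} (f : P ⟶ Q)
    [Presheaf.IsLocallySurjective J f] :
    Presheaf.IsLocallySurjective J ((presheafToSheaf J (Type u)).map f).hom := by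
  have : Presheaf.IsLocallySurjective J
      (toSheafify J P ≫ ((presheafToSheaf J (Type u)).map f).hom) := by
    rw [← toSheafify_naturality]
    infer_instance
  exact Presheaf.isLocallySurjective_of_isLocallySurjective J (toSheafify J P) _

lemma epi_presheafToSheaf_map {P Q : Cᵒᵖ ⥤ Type u} (f : P ⟶ Q)
    [Presheaf.IsLocallySurjective J f] :
    Epi ((presheafToSheaf J (Type u)).map f) := by
  haveI : Sheaf.IsLocallySurjective ((presheafToSheaf J (Type u)).map f) :=
    presheafToSheaf_map_locSurj J f
  infer_instance

section Tower

variable (F G : ℕᵒᵖ ⥤ Cᵒᵖ ⥤ Type u) (η : F ⟶ G) (X : C) (s : (limit G).obj (op X))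

/-- The tower of stages. -/
noncomputable def tower : ∀ n : ℕ,
    Stage (F.obj (op n)) (G.obj (op n)) (η.app (op n)) ((limit.π G (op n)).app (op X) s) :=
  fun n => Nat.rec (stage0 (η.app (op 0)) ((limit.π G (op 0)).app (op X) s))
    (fun n st => step (η.app (op (n + 1))) (F.map (homOfLE (Nat.le_succ n)).op)
      ((limit.π G (op (n + 1))).app (op X) s) st) n

/-- The transition maps between the coproducts of the tower. -/
noncomputable def towHom (n : ℕ) :
    (tower F G η X s (n + 1)).pre ⟶ (tower F G η X s n).pre :=
  stepHom (η.app (op (n + 1))) (F.map (homOfLE (Nat.le_succ n)).op)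
    ((limit.π G (op (n + 1))).app (op X) s) (tower F G η X s n)

lemma towHom_toY (n : ℕ) :
    towHom F G η X s n ≫ (tower F G η X s n).toY = (tower F G η X s (n + 1)).toY :=
  stepHom_toY _ _ _ _

variable {J}

/-- The canonical map out of the sheafified coproduct at level `n`. -/
noncomputable def towW (hF : ∀ n : ℕ, IsMultiplicative J (F.obj (op n))) (n : ℕ) :
    sheafify J (∐ fun j => yoneda.obj ((tower F G η X s n).obj j)) ⟶ F.obj (op n) :=
  multMap (hF n) (tower F G η X s n).obj (tower F G η X s n).lift

lemma towW_spec (hF : ∀ n : ℕ, IsMultiplicative J (F.obj (op n))) (n : ℕ)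
    (j : (tower F G η X s n).ι) :
    yonedaEquiv (Sigma.ι (fun j => yoneda.obj ((tower F G η X s n).obj j)) j ≫
      toSheafify J (∐ fun j => yoneda.obj ((tower F G η X s n).obj j)) ≫ towW F G η X s hF n)
      = (tower F G η X s n).lift j :=
  multMap_spec (hF n) _ _ j

/-- The canonical map out of the sheafification of `unitY X` at level `n`. -/
noncomputable def towChi (hG : ∀ n : ℕ, IsMultiplicative J (G.obj (op n))) (n : ℕ) :
    sheafify J (∐ fun _ : PUnit.{u + 1} => yoneda.obj X) ⟶ G.obj (op n) :=
  multMap (hG n) (fun _ : PUnit.{u + 1} => X) (fun _ => (limit.π G (op n)).app (op X) s)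

lemma towChi_spec (hG : ∀ n : ℕ, IsMultiplicative J (G.obj (op n))) (n : ℕ) :
    yonedaEquiv (Sigma.ι (fun _ : PUnit.{u + 1} => yoneda.obj X) PUnit.unit ≫
      toSheafify J (∐ fun _ : PUnit.{u + 1} => yoneda.obj X) ≫ towChi G X s hG n)
      = (limit.π G (op n)).app (op X) s :=
  multMap_spec (hG n) _ _ PUnit.unit

lemma towW_eta (hF : ∀ n : ℕ, IsMultiplicative J (F.obj (op n)))
    (hG : ∀ n : ℕ, IsMultiplicative J (G.obj (op n))) (n : ℕ) :
    towW F G η X s hF n ≫ η.app (op n)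
      = ((presheafToSheaf J (Type u)).map ((tower F G η X s n).toY)).hom ≫
          towChi G X s hG n := by
  apply mult_hom_ext (hG n)
  intro j
  apply yonedaEquiv.injective
  rw [show Sigma.ι (fun j => yoneda.obj ((tower F G η X s n).obj j)) j ≫
      toSheafify J (∐ fun j => yoneda.obj ((tower F G η X s n).obj j)) ≫
        (towW F G η X s hF n ≫ η.app (op n))
      = (Sigma.ι (fun j => yoneda.obj ((tower F G η X s n).obj j)) j ≫
        toSheafify J (∐ fun j => yoneda.obj ((tower F G η X s n).obj j)) ≫
          towW F G η X s hF n) ≫ η.app (op n) from by simp only [Category.assoc]]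
  rw [yonedaEquiv_comp, towW_spec, (tower F G η X s n).hlift j]
  rw [← toSheafify_naturality_assoc]
  simp only [Stage.toY]
  rw [← Category.assoc, Sigma.ι_desc]
  simp only [Category.assoc]
  rw [← yonedaEquiv_naturality, towChi_spec]

lemma towW_succ (hF : ∀ n : ℕ, IsMultiplicative J (F.obj (op n))) (n : ℕ) :
    towW F G η X s hF (n + 1) ≫ F.map (homOfLE (Nat.le_succ n)).op
      = ((presheafToSheaf J (Type u)).map (towHom F G η X s n)).hom ≫
          towW F G η X s hF n := by
  apply mult_hom_ext (hF n)
  intro j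
  apply yonedaEquiv.injective
  rw [show Sigma.ι (fun j => yoneda.obj ((tower F G η X s (n + 1)).obj j)) j ≫
      toSheafify J (∐ fun j => yoneda.obj ((tower F G η X s (n + 1)).obj j)) ≫
        (towW F G η X s hF (n + 1) ≫ F.map (homOfLE (Nat.le_succ n)).op)
      = (Sigma.ι (fun j => yoneda.obj ((tower F G η X s (n + 1)).obj j)) j ≫
        toSheafify J (∐ fun j => yoneda.obj ((tower F G η X s (n + 1)).obj j)) ≫
          towW F G η X s hF (n + 1)) ≫ F.map (homOfLE (Nat.le_succ n)).op from by
        simp only [Category.assoc]]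
  rw [yonedaEquiv_comp, towW_spec]
  rw [← toSheafify_naturality_assoc]
  simp only [towHom, stepHom]
  erw [← Category.assoc, Sigma.ι_desc]
  erw [Category.assoc]
  erw [← yonedaEquiv_naturality, towW_spec]
  exact step_lift_compat _ _ _ _ j

/-- The inverse system of sheafified coproducts. -/
noncomputable def towK : ℕᵒᵖ ⥤ Sheaf J (Type u) :=
  Functor.ofOpSequence
    (X := fun n => (presheafToSheaf J (Type u)).obj ((tower F G η X s n).pre))
    (fun n => (presheafToSheaf J (Type u)).map (towHom F G η X s n))

lemma towK_map (n : ℕ) :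
    (towK F G η X s).map (homOfLE (Nat.le_succ n)).op
      = (presheafToSheaf J (Type u)).map (towHom F G η X s n) := by
  rw [show homOfLE (Nat.le_succ n) = homOfLE (Nat.le_add_right n 1) from rfl]
  exact Functor.ofOpSequence_map_homOfLE_succ _ n

end Tower

theorem main_locSurj (hrep : IsReplete (Sheaf J (Type u)))
    (F G : ℕᵒᵖ ⥤ Cᵒᵖ ⥤ Type u) (η : F ⟶ G)
    (hF : ∀ n : ℕ, IsMultiplicative J (F.obj (op n)))
    (hG : ∀ n : ℕ, IsMultiplicative J (G.obj (op n)))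
    (hsurj : ∀ n : ℕ, Presheaf.IsLocallySurjective J (η.app (op n)))
    (hinj : ∀ n : ℕ, Presheaf.IsLocallyInjective J (η.app (op n))) :
    Presheaf.IsLocallySurjective J (limMap η) where
  imageSieve_mem {X} s := by
    classical
    -- the covering sieves used in the inductive construction are indeed covering
    have hstep : ∀ (n : ℕ) (j : (tower F G η X s n).ι),
        stepSieve (η.app (op (n + 1))) (F.map (homOfLE (Nat.le_succ n)).op)
          ((limit.π G (op (n + 1))).app (op X) s) (tower F G η X s n) j
          ∈ J ((tower F G η X s n).obj j) := by
      intro n j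
      haveI := hsurj (n + 1)
      haveI := hinj n
      refine stepSieve_mem (J := J) (η' := η.app (op (n + 1)))
        (tF := F.map (homOfLE (Nat.le_succ n)).op)
        (s' := (limit.π G (op (n + 1))).app (op X) s)
        (G.map (homOfLE (Nat.le_succ n)).op)
        (η.naturality (homOfLE (Nat.le_succ n)).op).symm ?_ (tower F G η X s n) j
      exact ConcreteCategory.congr_hom (NatTrans.congr_app (limit.w G (homOfLE (Nat.le_succ n)).op) (op X)) s
    haveI hrlocal : ∀ n : ℕ, Presheaf.IsLocallySurjective J (towHom F G η X s n) :=
      fun n => by exact stepHom_locSurj J _ _ _ _ (hstep n)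
    haveI h0 : Presheaf.IsLocallySurjective J ((tower F G η X s 0).toY) := by
      haveI := hsurj 0
      exact toY_locSurj J _ (stage0_covers J)
    have hEpiTrans : ∀ n : ℕ, Epi ((towK (J := J) F G η X s).map (homOfLE (Nat.le_succ n)).op) := by
      intro n
      rw [towK_map]
      exact epi_presheafToSheaf_map J _
    have hEpiπ : Epi (limit.π (towK (J := J) F G η X s) (op 0)) := hrep _ hEpiTrans 0
    haveI : Epi ((presheafToSheaf J (Type u)).map ((tower F G η X s 0).toY)) :=
      epi_presheafToSheaf_map J _
    have hEpiE : Epi (limit.π (towK (J := J) F G η X s) (op 0) ≫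
        (presheafToSheaf J (Type u)).map ((tower F G η X s 0).toY)) := epi_comp' hEpiπ this
    haveI hElocal : Sheaf.IsLocallySurjective (limit.π (towK (J := J) F G η X s) (op 0) ≫
        (presheafToSheaf J (Type u)).map ((tower F G η X s 0).toY)) :=
      (Sheaf.isLocallySurjective_iff_epi _).2 hEpiE
    -- the universal element of the sheafification of `unitY X` over `X`
    have hcov := Presheaf.imageSieve_mem J (limit.π (towK (J := J) F G η X s) (op 0) ≫
        (presheafToSheaf J (Type u)).map ((tower F G η X s 0).toY)).hom (U := op X)
        ((toSheafify J (unitY X)).app (op X)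
          ((Sigma.ι (fun _ : PUnit.{u + 1} => yoneda.obj X) PUnit.unit).app (op X) (𝟙 X)))
    refine J.superset_covering ?_ hcov
    intro Y f hf
    obtain ⟨k, hk⟩ := hf
    -- the compatible sequence of elements of the limit of the tower
    have hkn : ∀ n : ℕ, ((presheafToSheaf J (Type u)).map (towHom F G η X s n)).hom.app (op Y)
        ((limit.π (towK (J := J) F G η X s) (op (n + 1))).hom.app (op Y) k)
        = (limit.π (towK (J := J) F G η X s) (op n)).hom.app (op Y) k := by
      intro n
      have h1 := limit.w (towK (J := J) F G η X s) (homOfLE (Nat.le_succ n)).op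
      rw [towK_map] at h1
      have h2 := ConcreteCategory.congr_hom (NatTrans.congr_app (congrArg InducedCategory.Hom.hom h1) (op Y)) k
      exact h2
    -- image of the elements in the sheafification of `unitY X`
    have hpn : ∀ n : ℕ, ((presheafToSheaf J (Type u)).map ((tower F G η X s n).toY)).hom.app (op Y)
        ((limit.π (towK (J := J) F G η X s) (op n)).hom.app (op Y) k)
        = (sheafify J (unitY X)).map f.op
          ((toSheafify J (unitY X)).app (op X)
            ((Sigma.ι (fun _ : PUnit.{u + 1} => yoneda.obj X) PUnit.unit).app (op X) (𝟙 X))) := by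
      intro n
      induction n with
      | zero => exact hk
      | succ n ih =>
          rw [← towHom_toY F G η X s n, Functor.map_comp]
          have : (((presheafToSheaf J (Type u)).map (towHom F G η X s n)) ≫
              ((presheafToSheaf J (Type u)).map ((tower F G η X s n).toY))).hom.app (op Y)
              ((limit.π (towK (J := J) F G η X s) (op (n + 1))).hom.app (op Y) k)
              = ((presheafToSheaf J (Type u)).map ((tower F G η X s n).toY)).hom.app (op Y)
                (((presheafToSheaf J (Type u)).map (towHom F G η X s n)).hom.app (op Y)
                  ((limit.π (towK (J := J) F G η X s) (op (n + 1))).hom.app (op Y) k)) := rfl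
          rw [this, hkn n, ih]
    -- the sequence of lifts
    have hsucc_a : ∀ n : ℕ, (F.map (homOfLE (Nat.le_succ n)).op).app (op Y)
        ((towW F G η X s hF (n + 1)).app (op Y)
          ((limit.π (towK (J := J) F G η X s) (op (n + 1))).hom.app (op Y) k))
        = (towW F G η X s hF n).app (op Y)
          ((limit.π (towK (J := J) F G η X s) (op n)).hom.app (op Y) k) := by
      intro n
      have h1 := ConcreteCategory.congr_hom (NatTrans.congr_app (towW_succ F G η X s hF n) (op Y))
        ((limit.π (towK (J := J) F G η X s) (op (n + 1))).hom.app (op Y) k)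
      have h2 : (towW F G η X s hF (n + 1) ≫ F.map (homOfLE (Nat.le_succ n)).op).app (op Y)
          ((limit.π (towK (J := J) F G η X s) (op (n + 1))).hom.app (op Y) k)
          = (F.map (homOfLE (Nat.le_succ n)).op).app (op Y)
            ((towW F G η X s hF (n + 1)).app (op Y)
              ((limit.π (towK (J := J) F G η X s) (op (n + 1))).hom.app (op Y) k)) := rfl
      have h3 : (((presheafToSheaf J (Type u)).map (towHom F G η X s n)).hom ≫
          towW F G η X s hF n).app (op Y)
          ((limit.π (towK (J := J) F G η X s) (op (n + 1))).hom.app (op Y) k)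
          = (towW F G η X s hF n).app (op Y)
            (((presheafToSheaf J (Type u)).map (towHom F G η X s n)).hom.app (op Y)
              ((limit.π (towK (J := J) F G η X s) (op (n + 1))).hom.app (op Y) k)) := rfl
      rw [h2, h3, hkn n] at h1
      exact h1
    -- the lifts are compatible with η
    have heta_a : ∀ n : ℕ, (η.app (op n)).app (op Y)
        ((towW F G η X s hF n).app (op Y)
          ((limit.π (towK (J := J) F G η X s) (op n)).hom.app (op Y) k))
        = (G.obj (op n)).map f.op ((limit.π G (op n)).app (op X) s) := by
      intro n
      have h1 := ConcreteCategory.congr_hom (NatTrans.congr_app (towW_eta F G η X s hF hG n) (op Y))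
        ((limit.π (towK (J := J) F G η X s) (op n)).hom.app (op Y) k)
      have h2 : (towW F G η X s hF n ≫ η.app (op n)).app (op Y)
          ((limit.π (towK (J := J) F G η X s) (op n)).hom.app (op Y) k)
          = (η.app (op n)).app (op Y) ((towW F G η X s hF n).app (op Y)
            ((limit.π (towK (J := J) F G η X s) (op n)).hom.app (op Y) k)) := rfl
      have h3 : (((presheafToSheaf J (Type u)).map ((tower F G η X s n).toY)).hom ≫
          towChi G X s hG n).app (op Y)
          ((limit.π (towK (J := J) F G η X s) (op n)).hom.app (op Y) k)
          = (towChi G X s hG n).app (op Y)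
            (((presheafToSheaf J (Type u)).map ((tower F G η X s n).toY)).hom.app (op Y)
              ((limit.π (towK (J := J) F G η X s) (op n)).hom.app (op Y) k)) := rfl
      rw [h2, h3, hpn n] at h1
      have h4 := ConcreteCategory.congr_hom ((towChi G X s hG n).naturality f.op)
        ((toSheafify J (unitY X)).app (op X)
          ((Sigma.ι (fun _ : PUnit.{u + 1} => yoneda.obj X) PUnit.unit).app (op X) (𝟙 X)))
      have h5 : (towChi G X s hG n).app (op X)
          ((toSheafify J (unitY X)).app (op X)
            ((Sigma.ι (fun _ : PUnit.{u + 1} => yoneda.obj X) PUnit.unit).app (op X) (𝟙 X)))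
          = (limit.π G (op n)).app (op X) s := by
        have h6 := towChi_spec G X s hG n
        rw [yonedaEquiv_apply] at h6
        exact h6
      have h7 : (towChi G X s hG n).app (op Y) ((sheafify J (unitY X)).map f.op
          ((toSheafify J (unitY X)).app (op X)
            ((Sigma.ι (fun _ : PUnit.{u + 1} => yoneda.obj X) PUnit.unit).app (op X) (𝟙 X))))
          = (G.obj (op n)).map f.op ((towChi G X s hG n).app (op X)
            ((toSheafify J (unitY X)).app (op X)
              ((Sigma.ι (fun _ : PUnit.{u + 1} => yoneda.obj X) PUnit.unit).app (op X)
                (𝟙 X)))) := h4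
      rw [h1, h7, h5]
    -- conclude
    refine ⟨limElt F (op Y) (fun n => (towW F G η X s hF n).app (op Y)
        ((limit.π (towK (J := J) F G η X s) (op n)).hom.app (op Y) k)) hsucc_a, ?_⟩
    show (limMap η).app (op Y) (limElt F (op Y) (fun n => (towW F G η X s hF n).app (op Y)
        ((limit.π (towK (J := J) F G η X s) (op n)).hom.app (op Y) k)) hsucc_a)
      = (limit G).map f.op s
    apply limObj_ext
    intro n
    have hπ := ConcreteCategory.congr_hom (NatTrans.congr_app (limMap_π η (op n)) (op Y))
      (limElt F (op Y) (fun n => (towW F G η X s hF n).app (op Y)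
        ((limit.π (towK (J := J) F G η X s) (op n)).hom.app (op Y) k)) hsucc_a)
    have h7 : (limMap η ≫ limit.π G (op n)).app (op Y) (limElt F (op Y) (fun n => (towW F G η X s hF n).app (op Y)
        ((limit.π (towK (J := J) F G η X s) (op n)).hom.app (op Y) k)) hsucc_a)
        = (limit.π G (op n)).app (op Y) ((limMap η).app (op Y) (limElt F (op Y) (fun n => (towW F G η X s hF n).app (op Y)
        ((limit.π (towK (J := J) F G η X s) (op n)).hom.app (op Y) k)) hsucc_a)) := rfl
    have h8 : (limit.π F (op n) ≫ η.app (op n)).app (op Y) (limElt F (op Y) (fun n => (towW F G η X s hF n).app (op Y)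
        ((limit.π (towK (J := J) F G η X s) (op n)).hom.app (op Y) k)) hsucc_a)
        = (η.app (op n)).app (op Y) ((limit.π F (op n)).app (op Y)
            (limElt F (op Y) (fun n => (towW F G η X s hF n).app (op Y)
        ((limit.π (towK (J := J) F G η X s) (op n)).hom.app (op Y) k)) hsucc_a)) := rfl
    rw [h7, h8, limElt_π] at hπ
    rw [hπ, heta_a n]
    exact (ConcreteCategory.congr_hom ((limit.π G (op n)).naturality f.op) s).symm

end Stmt7Aux

open Stmt7Aux in
/-- If `Shv(T)` is replete and `η : (F_i) ⟶ (G_i)` is a map of `ℕ`-indexed inverse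
systems of multiplicative presheaves inducing isomorphisms on sheafifications, then
the induced map `(lim F_i)^♯ → (lim G_i)^♯` is an epimorphism of sheaves. -/
theorem stmt_7 (J : GrothendieckTopology C) (hrep : IsReplete (Sheaf J (Type u)))
    (F G : ℕᵒᵖ ⥤ Cᵒᵖ ⥤ Type u) (η : F ⟶ G)
    (hF : ∀ n : ℕ, IsMultiplicative J (F.obj (op n)))
    (hG : ∀ n : ℕ, IsMultiplicative J (G.obj (op n)))
    (hiso : ∀ n : ℕ, IsIso ((presheafToSheaf J (Type u)).map (η.app (op n)))) :
    Epi ((presheafToSheaf J (Type u)).map (limMap η)) := by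
  have hval : ∀ n : ℕ, IsIso ((presheafToSheaf J (Type u)).map (η.app (op n))).hom := by
    intro n
    haveI := hiso n
    exact inferInstanceAs (IsIso ((sheafToPresheaf J (Type u)).map
      ((presheafToSheaf J (Type u)).map (η.app (op n)))))
  have hsurj : ∀ n : ℕ, Presheaf.IsLocallySurjective J (η.app (op n)) := by
    intro n
    haveI := hval n
    haveI : Presheaf.IsLocallySurjective J
        (η.app (op n) ≫ toSheafify J (G.obj (op n))) := by
      rw [toSheafify_naturality]
      infer_instance
    exact Presheaf.isLocallySurjective_of_isLocallySurjective_of_isLocallyInjective J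
      (η.app (op n)) (toSheafify J (G.obj (op n)))
  have hinj : ∀ n : ℕ, Presheaf.IsLocallyInjective J (η.app (op n)) := by
    intro n
    haveI := hval n
    haveI : Presheaf.IsLocallyInjective J
        (η.app (op n) ≫ toSheafify J (G.obj (op n))) := by
      rw [toSheafify_naturality]
      infer_instance
    exact Presheaf.isLocallyInjective_of_isLocallyInjective J (η.app (op n))
      (toSheafify J (G.obj (op n)))
  haveI : Presheaf.IsLocallySurjective J (limMap η) :=
    main_locSurj J hrep F G η hF hG hsurj hinj
  exact epi_presheafToSheaf_map J (limMap η)
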